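/- Let U_n be the n×n integer matrix with all entries 1 except diagonal entries U[i][i] = 2 for i ≥ 2 (first diagonal entry is 1), and V_n the n×n integer matrix equal to the identity except that the first row is (1, -1, -1, ..., -1). Then U_n and V_n are unimodular (determinant ±1), and U_n · circ(n,-1,...,-1) · V_n = diag(1, n+1, n+1, ..., n+1). -/

import Mathlib

theorem smith_normal_form_circ (n : ℕ) (hn : 2 ≤ n)
    (U V M : Matrix (Fin n) (Fin n) ℤ)
    (hU : ∀ i j, U i j = if i = j ∧ (i : ℕ) ≠ 0 then 2 else 1)
    (hV : ∀ i j, V i j = if i = j then 1 else if (i : ℕ) = 0 then -1 else 0)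
    (hM : ∀ i j, M i j = if i = j then (n : ℤ) else -1) :
    IsUnit U.det ∧ IsUnit V.det ∧
    U * M * V = Matrix.diagonal (fun i : Fin n => if (i : ℕ) = 0 then 1 else (n : ℤ) + 1) := by
  have hn0 : 0 < n := by omega
  set z : Fin n := ⟨0, hn0⟩ with hzdef
  have hz : ∀ i : Fin n, (i : ℕ) = 0 ↔ i = z := fun i =>
    ⟨fun h => Fin.ext h, fun h => by rw [h]⟩
  have hz0 : ((z : Fin n) : ℕ) = 0 := rfl
  have hU1 : ∀ j, U z j = 1 := by intro j; rw [hU]; simp [hz0]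
  have hU2 : ∀ k j, ¬ k = z → U k j = if k = j then 2 else 1 := by
    intro k j hk; rw [hU]
    have h : (k : ℕ) ≠ 0 := fun h => hk ((hz k).1 h)
    simp [h]
  have hV1 : ∀ k, V z k = if z = k then 1 else -1 := by
    intro k; rw [hV]; by_cases h : z = k <;> simp [h, hz0]
  have hV2 : ∀ i k, ¬ i = z → V i k = if i = k then 1 else 0 := by
    intro i k hk; rw [hV]
    have h : (i : ℕ) ≠ 0 := fun h => hk ((hz i).1 h)
    simp [h]
  refine ⟨?_, ?_, ?_⟩
  · -- left inverse of U
    apply Matrix.isUnit_det_of_left_inverse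
      (B := Matrix.of fun i j =>
        if i = z then (if j = z then (n : ℤ) else -1)
        else if j = z then -1 else if i = j then 1 else 0)
    ext i j
    rw [Matrix.mul_apply, Matrix.one_apply]
    by_cases hi : i = z
    · -- row z of W is (n, -1, ..., -1)
      have hrw : ∀ k : Fin n,
          (Matrix.of fun i j =>
            if i = z then (if j = z then (n : ℤ) else -1)
            else if j = z then -1 else if i = j then 1 else 0) i k * U k j
          = (-1) * U k j + (if k = z then ((n : ℤ) + 1) * U k j else 0) := by
        intro k
        by_cases h1 : k = z <;> simp [hi, h1] <;> ring
      rw [Finset.sum_congr rfl fun k _ => hrw k]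
      rw [Finset.sum_add_distrib]
      have hs1 : ∑ k : Fin n, (-1) * U k j
          = -(n : ℤ) + (if j = z then 0 else -1) := by
        have e : ∀ k : Fin n, (-1) * U k j
            = -1 + (if k = j then (if j = z then 0 else (-1 : ℤ)) else 0) := by
          intro k
          by_cases h1 : k = j
          · by_cases h2 : j = z
            · rw [h1, h2, hU1]; simp [h2] <;> ring
            · rw [h1, hU2 j j h2]; simp [h2] <;> ring
          · by_cases h2 : k = z
            · have h3 : ¬ z = j := fun hh => h1 (h2.trans hh)
              rw [h2, hU1]; simp [h3]
            · rw [hU2 k j h2]; simp [h1]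
        rw [Finset.sum_congr rfl fun k _ => e k, Finset.sum_add_distrib]
        simp only [Finset.sum_ite_eq', Finset.mem_univ, if_true, Finset.sum_const,
          Finset.card_univ, Fintype.card_fin, nsmul_eq_mul]
        ring
      have hs2 : ∑ k : Fin n, (if k = z then ((n : ℤ) + 1) * U k j else 0)
          = ((n : ℤ) + 1) := by
        rw [Finset.sum_ite_eq' Finset.univ z (fun k => ((n : ℤ) + 1) * U k j)]
        simp [hU1]
      rw [hs1, hs2]
      by_cases h : j = z
      · have hij : i = j := by rw [hi, h]
        simp only [h, hij, if_true, if_pos]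
        ring
      · have hij : ¬ i = j := by rw [hi]; exact fun hh => h hh.symm
        simp only [h, hij, if_false]
        ring
    · -- row i ≠ z of W : -e_z + e_i
      have hrw : ∀ k : Fin n,
          (Matrix.of fun i j =>
            if i = z then (if j = z then (n : ℤ) else -1)
            else if j = z then -1 else if i = j then 1 else 0) i k * U k j
          = (if k = z then -(U k j) else 0) + (if k = i then U k j else 0) := by
        intro k
        by_cases h1 : k = z
        · have hki : ¬ k = i := fun hh => hi (hh.symm.trans h1)
          have hzi : ¬ z = i := fun hh => hi hh.symm
          simp [hi, h1, hki, hzi] <;> ring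
        · by_cases h2 : k = i
          · subst h2
            simp [hi, h1] <;> ring
          · have h2' : ¬ i = k := fun hh => h2 hh.symm
            simp [hi, h1, h2, h2']
      rw [Finset.sum_congr rfl fun k _ => hrw k, Finset.sum_add_distrib]
      simp only [Finset.sum_ite_eq', Finset.mem_univ, if_true]
      rw [hU1, hU2 i j hi]
      by_cases h : i = j <;> simp [h] <;> ring
  · -- right inverse of V
    apply Matrix.isUnit_det_of_right_inverse
      (B := Matrix.of fun i j => if i = z then (1 : ℤ) else if i = j then 1 else 0)
    ext i j
    rw [Matrix.mul_apply, Matrix.one_apply]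
    by_cases hi : i = z
    · have hrw : ∀ k : Fin n,
          V i k * (Matrix.of fun i j => if i = z then (1 : ℤ) else if i = j then 1 else 0) k j
          = (if k = z then 1 else 0)
            + (if k = j then (if j = z then 0 else (-1 : ℤ)) else 0) := by
        intro k
        rw [hi, hV1]
        by_cases h1 : k = z
        · subst h1
          by_cases h2 : j = z
          · simp [h2]
          · have h2' : ¬ z = j := fun hh => h2 hh.symm
            simp [h2, h2']
        · have h1' : ¬ z = k := fun hh => h1 hh.symm
          by_cases h2 : k = j
          · subst h2
            simp [h1, h1']
          · simp [h1, h1', h2]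
      rw [Finset.sum_congr rfl fun k _ => hrw k, Finset.sum_add_distrib]
      simp only [Finset.sum_ite_eq', Finset.mem_univ, if_true]
      by_cases h : j = z
      · have hij : i = j := by rw [hi, h]
        simp [hij, h]
      · have hij : ¬ i = j := by rw [hi]; exact fun hh => h hh.symm
        simp [hij, h]
    · have hrw : ∀ k : Fin n,
          V i k * (Matrix.of fun i j => if i = z then (1 : ℤ) else if i = j then 1 else 0) k j
          = (if k = i then (if i = j then (1 : ℤ) else 0) else 0) := by
        intro k
        rw [hV2 i k hi]
        by_cases h1 : k = i
        · subst h1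
          simp [hi]
        · have h1' : ¬ i = k := fun hh => h1 hh.symm
          simp [h1, h1']
      rw [Finset.sum_congr rfl fun k _ => hrw k]
      simp only [Finset.sum_ite_eq', Finset.mem_univ, if_true]
  · -- the product
    have hA : ∀ i j, (U * M) i j =
        if i = z then 1 else if i = j then (n : ℤ) + 1 else 0 := by
      intro i j
      rw [Matrix.mul_apply]
      have hsum : ∑ k : Fin n, M k j = 1 := by
        have e : ∀ k : Fin n, M k j = -1 + (if k = j then (n : ℤ) + 1 else 0) := by
          intro k; rw [hM]; by_cases h : k = j <;> simp [h] <;> ring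
        rw [Finset.sum_congr rfl fun k _ => e k, Finset.sum_add_distrib]
        simp only [Finset.sum_ite_eq', Finset.mem_univ, if_true, Finset.sum_const,
          Finset.card_univ, Fintype.card_fin, nsmul_eq_mul]
        ring
      by_cases hi : i = z
      · have hrw : ∀ k : Fin n, U i k * M k j = M k j := by
          intro k; rw [hi, hU1]; ring
        rw [Finset.sum_congr rfl fun k _ => hrw k, hsum]
        simp [hi]
      · have hrw : ∀ k : Fin n, U i k * M k j
            = M k j + (if k = i then M k j else 0) := by
          intro k
          rw [hU2 i k hi]
          by_cases h1 : i = k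
          · subst h1
            simp <;> ring
          · have h1' : ¬ k = i := fun hh => h1 hh.symm
            simp [h1, h1']
        rw [Finset.sum_congr rfl fun k _ => hrw k, Finset.sum_add_distrib, hsum]
        simp only [Finset.sum_ite_eq', Finset.mem_univ, if_true]
        rw [hM]
        by_cases h : i = j
        · have hjz : ¬ j = z := fun hh => hi (h.trans hh)
          simp [h, hi, hjz] <;> ring
        · simp [h, hi] <;> ring
    ext i j
    rw [Matrix.mul_apply, Matrix.diagonal_apply]
    by_cases hi : i = z
    · have hrw : ∀ k : Fin n, (U * M) i k * V k j
          = (if k = j then (1 : ℤ) else 0)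
            + (if k = z then (if z = j then (0 : ℤ) else -1) else 0) := by
        intro k
        rw [hA, if_pos hi, one_mul, hV]
        by_cases h1 : k = j
        · by_cases h2 : k = z
          · have h3 : z = j := h2.symm.trans h1
            simp [h1, h2, h3]
          · have h3 : ¬ j = z := fun hh => h2 (h1.trans hh)
            have h3' : ¬ z = j := fun hh => h3 hh.symm
            simp [h1, h2, h3, h3']
        · by_cases h2 : k = z
          · have h3 : ¬ z = j := fun hh => h1 (h2.trans hh)
            have h4 : (k : ℕ) = 0 := (hz k).2 h2
            simp [h1, h2, h3, h4, hz0]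
          · have h4 : ¬ (k : ℕ) = 0 := fun hh => h2 ((hz k).1 hh)
            simp [h1, h2, h4]
      rw [Finset.sum_congr rfl fun k _ => hrw k, Finset.sum_add_distrib]
      simp only [Finset.sum_ite_eq', Finset.mem_univ, if_true]
      by_cases h : j = z
      · have hij : i = j := by rw [hi, h]
        have hi0 : (i : ℕ) = 0 := (hz i).2 hi
        have hj0 : (j : ℕ) = 0 := (hz j).2 h
        simp [hij, h.symm, hi0, hj0]
      · have hij : ¬ i = j := by rw [hi]; exact fun hh => h hh.symm
        have h' : ¬ z = j := fun hh => h hh.symm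
        simp [hij, h']
    · have hrw : ∀ k : Fin n, (U * M) i k * V k j
          = (if k = i then ((n : ℤ) + 1) * V k j else 0) := by
        intro k
        rw [hA]
        by_cases h1 : k = i
        · subst h1
          simp [hi]
        · have h1' : ¬ i = k := fun hh => h1 hh.symm
          simp [hi, h1, h1']
      rw [Finset.sum_congr rfl fun k _ => hrw k]
      simp only [Finset.sum_ite_eq', Finset.mem_univ, if_true]
      rw [hV2 i j hi]
      have hi0 : ¬ (i : ℕ) = 0 := fun h => hi ((hz i).1 h)
      by_cases h : i = j
      · have hj0 : ¬ (j : ℕ) = 0 := fun hh => hi (h.trans ((hz j).1 hh))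
        simp [h, hj0] <;> ring
      · simp [h, hi0]
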